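/- If S is a Γ-semiring with left unity (there exist finitely many eᵢ ∈ S, δᵢ ∈ Γ with Σᵢ eᵢδᵢx = x for all x ∈ S), then the constant fuzzy subset 1 (value 1 everywhere) is a left identity for composition of fuzzy left ideals: 1∘μ = μ for every fuzzy left ideal μ. -/

import Mathlib

open Classical

/-- A Γ-semiring: additive commutative monoids `S` and `G` with a triadditive,
associative product `tmul : S → G → S → S` for which zero is absorbing. -/
class GammaSemiring (S : Type*) (G : Type*) [AddCommMonoid S] [AddCommMonoid G] where
  tmul : S → G → S → S
  add_tmul : ∀ (a b : S) (γ : G) (c : S), tmul (a + b) γ c = tmul a γ c + tmul b γ c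
  tmul_add : ∀ (a : S) (γ : G) (b c : S), tmul a γ (b + c) = tmul a γ b + tmul a γ c
  tmul_gadd : ∀ (a : S) (γ δ : G) (b : S), tmul a (γ + δ) b = tmul a γ b + tmul a δ b
  tmul_assoc : ∀ (a : S) (γ : G) (b : S) (δ : G) (c : S),
      tmul a γ (tmul b δ c) = tmul (tmul a γ b) δ c
  zero_tmul : ∀ (γ : G) (x : S), tmul 0 γ x = 0
  tmul_zero : ∀ (x : S) (γ : G), tmul x γ 0 = 0
  tmul_gzero : ∀ (x y : S), tmul x 0 y = 0

/-- μ is a fuzzy left ideal: `[0,1]`-valued, `μ 0 = 1`, superadditive under `min`,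
and `μ (xγy) ≥ μ y`. -/
def IsFuzzyLeftIdeal (S G : Type*) [AddCommMonoid S] [AddCommMonoid G]
    [GammaSemiring S G] (μ : S → ℝ) : Prop :=
  (∀ x, μ x ∈ Set.Icc (0 : ℝ) 1) ∧ μ 0 = 1 ∧
  (∀ x y, min (μ x) (μ y) ≤ μ (x + y)) ∧
  (∀ (x : S) (γ : G) (y : S), μ y ≤ μ (GammaSemiring.tmul x γ y))

/-- μ is a fuzzy right ideal. -/
def IsFuzzyRightIdeal (S G : Type*) [AddCommMonoid S] [AddCommMonoid G]
    [GammaSemiring S G] (μ : S → ℝ) : Prop :=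
  (∀ x, μ x ∈ Set.Icc (0 : ℝ) 1) ∧ μ 0 = 1 ∧
  (∀ x y, min (μ x) (μ y) ≤ μ (x + y)) ∧
  (∀ (x : S) (γ : G) (y : S), μ x ≤ μ (GammaSemiring.tmul x γ y))

/-- μ is a fuzzy (two-sided) ideal. -/
def IsFuzzyIdeal (S G : Type*) [AddCommMonoid S] [AddCommMonoid G]
    [GammaSemiring S G] (μ : S → ℝ) : Prop :=
  (∀ x, μ x ∈ Set.Icc (0 : ℝ) 1) ∧ μ 0 = 1 ∧
  (∀ x y, min (μ x) (μ y) ≤ μ (x + y)) ∧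
  (∀ (x : S) (γ : G) (y : S), max (μ x) (μ y) ≤ μ (GammaSemiring.tmul x γ y))

/-- The sum `μ ⊕ ν` of fuzzy subsets: `(μ ⊕ ν)(x) = sup { min (μ u) (ν v) : x = u + v }`. -/
noncomputable def fSum {S : Type*} [AddCommMonoid S] (μ ν : S → ℝ) : S → ℝ := fun x =>
  sSup {r : ℝ | ∃ u v : S, x = u + v ∧ r = min (μ u) (ν v)}

/-- The product `μ Γ ν`: `(μ Γ ν)(x) = sup { min (μ u) (ν v) : x = uγv }`
(`sSup ∅ = 0` in `ℝ`, matching the convention that it is `0` with no representation). -/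
noncomputable def fProd (S G : Type*) [AddCommMonoid S] [AddCommMonoid G]
    [GammaSemiring S G] (μ ν : S → ℝ) : S → ℝ := fun x =>
  sSup {r : ℝ | ∃ (u : S) (γ : G) (v : S),
    x = GammaSemiring.tmul u γ v ∧ r = min (μ u) (ν v)}

/-- The composition `μ ∘ ν`:
`(μ ∘ ν)(x) = sup { min_{1 ≤ i ≤ n} min (μ uᵢ) (ν vᵢ) : x = Σᵢ uᵢγᵢvᵢ, n ≥ 1 }`. -/
noncomputable def fComp (S G : Type*) [AddCommMonoid S] [AddCommMonoid G]
    [GammaSemiring S G] (μ ν : S → ℝ) : S → ℝ := fun x =>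
  sSup {r : ℝ | ∃ (n : ℕ) (u v : Fin (n + 1) → S) (γ : Fin (n + 1) → G),
    x = ∑ i, GammaSemiring.tmul (u i) (γ i) (v i) ∧
    r = Finset.univ.inf' Finset.univ_nonempty (fun i => min (μ (u i)) (ν (v i)))}

theorem one_fComp {S G : Type*} [AddCommMonoid S] [AddCommMonoid G]
    [GammaSemiring S G]
    (hunity : ∃ (k : ℕ) (e : Fin (k + 1) → S) (δ : Fin (k + 1) → G),
      ∀ x : S, ∑ i, GammaSemiring.tmul (e i) (δ i) x = x)
    (μ : S → ℝ) (hμ : IsFuzzyLeftIdeal S G μ) :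
    fComp S G (fun _ => (1 : ℝ)) μ = μ := by
  obtain ⟨hbd, h0, hadd, hleft⟩ := hμ
  have key : ∀ {ι : Type} (s : Finset ι) (hs : s.Nonempty) (f : ι → S),
      s.inf' hs (fun i => μ (f i)) ≤ μ (∑ i ∈ s, f i) := by
    intro ι s hs f
    induction hs using Finset.Nonempty.cons_induction with
    | singleton a => simp
    | cons a s ha hs ih =>
        rw [Finset.sum_cons, Finset.inf'_cons hs]
        exact le_trans (min_le_min le_rfl ih) (hadd _ _)
  funext x
  apply le_antisymm
  · apply Real.sSup_le
    · rintro r ⟨n, u, v, γ, hx, hr⟩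
      subst hx
      calc r ≤ Finset.univ.inf' Finset.univ_nonempty
              (fun i : Fin (n+1) => μ (GammaSemiring.tmul (u i) (γ i) (v i))) := by
            rw [hr]
            exact Finset.le_inf' _ _ (fun i _ => Finset.inf'_le_of_le _ (Finset.mem_univ i)
              (le_trans (min_le_right _ _) (hleft _ _ _)))
        _ ≤ μ (∑ i, GammaSemiring.tmul (u i) (γ i) (v i)) :=
            key Finset.univ Finset.univ_nonempty _
    · exact (hbd _).1
  · obtain ⟨k, e, δ, he⟩ := hunity
    apply le_csSup
    · refine ⟨1, ?_⟩
      rintro r ⟨n, u, v, γ, hx, hr⟩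
      rw [hr]
      apply Finset.inf'_le_of_le _ (Finset.mem_univ (0 : Fin (n+1)))
      exact le_trans (min_le_right _ _) (hbd _).2
    · refine ⟨k, e, fun _ => x, δ, (he x).symm, ?_⟩
      simp [min_eq_right (hbd x).2]
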